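/- arXiv:1704.06087 — 5 statements merged into one kernel-verified Lean document; each statement's English description precedes it below -/
import Mathlib

section
/- Let b, g > 0, α > 1, q ∈ ℝ, p ∈ [1,∞), and u₀ ∈ L^p((0,∞), x^q dx). Then for each t ≥ 0 the series u(t,x) = e^{-(b+g)t} ∑_{k=0}^∞ u₀(α^k x e^{-gt}) (bα²t)^k / k! converges in L^p((0,∞), x^q dx), and its L^p(x^q dx)-norm is bounded by e^{-(b+g)t} e^{g(q+1)t/p} exp(bα² t α^{-(q+1)/p}) ‖u₀‖_{L^p(x^q dx)}. -/
open MeasureTheory Real Filter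
open scoped ENNReal NNReal

set_option maxHeartbeats 1000000

lemma lint_tsum_le (μ : Measure ℝ) (p : ℝ) (hp : 1 ≤ p) (f : ℕ → ℝ → ℝ)
    (hf : ∀ k, AEStronglyMeasurable (f k) μ) :
    ∫⁻ x, (∑' k, (‖f k x‖₊ : ℝ≥0∞)) ^ p ∂μ
      ≤ (∑' k, eLpNorm (f k) (ENNReal.ofReal p) μ) ^ p := by
  have hp0 : 0 < p := lt_of_lt_of_le one_pos hp
  have hP0 : (ENNReal.ofReal p) ≠ 0 := (ENNReal.ofReal_pos.mpr hp0).ne'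
  have hP1 : (1 : ℝ≥0∞) ≤ ENNReal.ofReal p := by
    rw [← ENNReal.ofReal_one]; exact ENNReal.ofReal_le_ofReal hp
  set M : ℕ → ℝ≥0∞ := fun k => eLpNorm (f k) (ENNReal.ofReal p) μ with hM
  have key : ∀ n, ∫⁻ x, (∑ k ∈ Finset.range n, (‖f k x‖₊ : ℝ≥0∞)) ^ p ∂μ ≤ (∑' k, M k) ^ p := by
    intro n
    have h2 : (fun x => ∑ k ∈ Finset.range n, ‖f k x‖)
        = ∑ k ∈ Finset.range n, (fun x => ‖f k x‖) := by
      funext x; simp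
    have h1 : eLpNorm (fun x => ∑ k ∈ Finset.range n, ‖f k x‖) (ENNReal.ofReal p) μ
        ≤ ∑ k ∈ Finset.range n, M k := by
      rw [h2]
      refine (eLpNorm_sum_le (fun i _ => (hf i).norm) hP1).trans ?_
      exact Finset.sum_le_sum fun i _ => le_of_eq (eLpNorm_norm _)
    have h3 : ∫⁻ x, (∑ k ∈ Finset.range n, (‖f k x‖₊ : ℝ≥0∞)) ^ p ∂μ
        = eLpNorm (fun x => ∑ k ∈ Finset.range n, ‖f k x‖) (ENNReal.ofReal p) μ ^ p := by
      rw [eLpNorm_eq_lintegral_rpow_enorm_toReal hP0 ENNReal.ofReal_ne_top,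
        ENNReal.toReal_ofReal hp0.le, ← ENNReal.rpow_mul, one_div,
        inv_mul_cancel₀ hp0.ne', ENNReal.rpow_one]
      refine lintegral_congr fun x => ?_
      congr 1
      rw [Real.enorm_eq_ofReal (Finset.sum_nonneg fun i _ => norm_nonneg _),
        ENNReal.ofReal_sum_of_nonneg fun i _ => norm_nonneg _]
      exact Finset.sum_congr rfl fun i _ => (ofReal_norm _).symm
    rw [h3]
    refine ENNReal.rpow_le_rpow ?_ hp0.le
    exact h1.trans (ENNReal.sum_le_tsum _)
  have hmeas : ∀ n, AEMeasurable (fun x => (∑ k ∈ Finset.range n, (‖f k x‖₊ : ℝ≥0∞)) ^ p) μ :=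
    fun n => (Finset.aemeasurable_fun_sum _ fun i _ => (hf i).enorm).pow_const _
  have hlim : ∀ x, Tendsto (fun n => (∑ k ∈ Finset.range n, (‖f k x‖₊ : ℝ≥0∞)) ^ p) atTop
      (nhds ((∑' k, (‖f k x‖₊ : ℝ≥0∞)) ^ p)) := fun x =>
    (ENNReal.continuous_rpow_const.tendsto _).comp (ENNReal.tendsto_nat_tsum _)
  calc ∫⁻ x, (∑' k, (‖f k x‖₊ : ℝ≥0∞)) ^ p ∂μ
      = ∫⁻ x, atTop.liminf (fun n => (∑ k ∈ Finset.range n, (‖f k x‖₊ : ℝ≥0∞)) ^ p) ∂μ :=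
        lintegral_congr fun x => ((hlim x).liminf_eq).symm
    _ ≤ atTop.liminf fun n => ∫⁻ x, (∑ k ∈ Finset.range n, (‖f k x‖₊ : ℝ≥0∞)) ^ p ∂μ :=
        lintegral_liminf_le' hmeas
    _ ≤ (∑' k, M k) ^ p := liminf_le_of_frequently_le' (Frequently.of_forall key)

lemma map_scale_aux (q c : ℝ) (hc : 0 < c) :
    Measure.map (fun x => c * x)
        ((volume.restrict (Set.Ioi (0:ℝ))).withDensity fun x => ENNReal.ofReal (x ^ q))
      = ENNReal.ofReal (c ^ (-(q+1))) •
        ((volume.restrict (Set.Ioi (0:ℝ))).withDensity fun x => ENNReal.ofReal (x ^ q)) := by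
  have hqm : Measurable fun x : ℝ => ENNReal.ofReal (x ^ q) :=
    ENNReal.measurable_ofReal.comp (measurable_id.pow_const q)
  refine Measure.ext fun s hs => ?_
  have hpm : MeasurableSet ((fun x => c * x) ⁻¹' s) := hs.preimage (measurable_const_mul c)
  rw [Measure.map_apply (measurable_const_mul c) hs, Measure.smul_apply, smul_eq_mul,
    withDensity_apply _ hpm, withDensity_apply _ hs,
    Measure.restrict_restrict hpm, Measure.restrict_restrict hs]
  -- goal : ∫⁻ x in (c*·)⁻¹'s ∩ Ioi 0, ofReal (x^q) = ofReal (c^(-(q+1))) * ∫⁻ y in s ∩ Ioi 0, ofReal (y^q)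
  set Ipre := ∫⁻ x in ((fun x => c * x) ⁻¹' s) ∩ Set.Ioi 0, ENNReal.ofReal (x ^ q) with hIpre
  set Is := ∫⁻ y in s ∩ Set.Ioi 0, ENNReal.ofReal (y ^ q) with hIs
  have hpre : (fun x => c * x) ⁻¹' (s ∩ Set.Ioi 0) = ((fun x => c * x) ⁻¹' s) ∩ Set.Ioi 0 := by
    ext x
    simp only [Set.mem_preimage, Set.mem_inter_iff, Set.mem_Ioi]
    exact and_congr_right fun _ => mul_pos_iff_of_pos_left hc
  have hmap : Measure.map (fun x => c * x) volume = ENNReal.ofReal c⁻¹ • volume := by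
    rw [Real.map_volume_mul_left hc.ne', abs_of_pos (inv_pos.mpr hc)]
  have h1 : ∫⁻ y in s ∩ Set.Ioi 0, ENNReal.ofReal (y ^ q)
        ∂(Measure.map (fun x => c * x) volume)
      = ∫⁻ x in (fun x => c * x) ⁻¹' (s ∩ Set.Ioi 0), ENNReal.ofReal ((c * x) ^ q) ∂volume :=
    setLIntegral_map (hs.inter measurableSet_Ioi) hqm
      (measurable_const_mul c)
  rw [hmap, hpre] at h1
  rw [Measure.restrict_smul, lintegral_smul_measure] at h1
  have h2 : ∫⁻ x in ((fun x => c * x) ⁻¹' s) ∩ Set.Ioi 0, ENNReal.ofReal ((c * x) ^ q) ∂volume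
      = ENNReal.ofReal (c ^ q) * Ipre := by
    rw [hIpre, ← lintegral_const_mul' _ _ ENNReal.ofReal_ne_top]
    refine setLIntegral_congr_fun_ae (hpm.inter measurableSet_Ioi) (ae_of_all _ ?_)
    intro x hx
    rw [Real.mul_rpow hc.le (le_of_lt hx.2), ENNReal.ofReal_mul (Real.rpow_nonneg hc.le q)]
  rw [h2] at h1
  -- h1 : ofReal c⁻¹ * Is = ofReal (c^q) * Ipre
  have h3 : Is = ENNReal.ofReal (c ^ (q+1)) * Ipre := by
    have := congrArg (fun z => ENNReal.ofReal c * z) h1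
    simp only [smul_eq_mul, ← mul_assoc, ← ENNReal.ofReal_mul hc.le, mul_inv_cancel₀ hc.ne',
      ENNReal.ofReal_one, one_mul] at this
    rw [hIs, this]
    congr 1
    rw [Real.rpow_add hc, Real.rpow_one]
    ring_nf
  rw [h3, ← mul_assoc, ← ENNReal.ofReal_mul (Real.rpow_nonneg hc.le _),
    ← Real.rpow_add hc, neg_add_cancel, Real.rpow_zero, ENNReal.ofReal_one, one_mul]

lemma scale_aux {q p : ℝ} (hp : 1 ≤ p) {u₀ : ℝ → ℝ} {μ : Measure ℝ}
    (hμ : μ = (volume.restrict (Set.Ioi (0:ℝ))).withDensity fun x => ENNReal.ofReal (x ^ q))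
    (hu₀ : MemLp u₀ (ENNReal.ofReal p) μ) {c : ℝ} (hc : 0 < c) :
    MemLp (fun x => u₀ (c * x)) (ENNReal.ofReal p) μ ∧
      eLpNorm (fun x => u₀ (c * x)) (ENNReal.ofReal p) μ
        = ENNReal.ofReal (c ^ (-(q+1) / p)) * eLpNorm u₀ (ENNReal.ofReal p) μ := by
  have hp0 : 0 < p := lt_of_lt_of_le one_pos hp
  have hmap : Measure.map (fun x => c * x) μ = ENNReal.ofReal (c ^ (-(q+1))) • μ := by
    rw [hμ]; exact map_scale_aux q c hc
  have hsm : AEStronglyMeasurable u₀ (Measure.map (fun x => c * x) μ) := by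
    rw [hmap]
    exact hu₀.1.mono_ac Measure.smul_absolutelyContinuous
  have hcomp : eLpNorm (fun x => u₀ (c * x)) (ENNReal.ofReal p) μ
      = eLpNorm u₀ (ENNReal.ofReal p) (Measure.map (fun x => c * x) μ) :=
    (eLpNorm_map_measure hsm (measurable_const_mul c).aemeasurable).symm
  have hpos : (0:ℝ) < c ^ (-(q+1)) := Real.rpow_pos_of_pos hc _
  have hsmul : eLpNorm u₀ (ENNReal.ofReal p) (Measure.map (fun x => c * x) μ)
      = ENNReal.ofReal (c ^ (-(q+1) / p)) * eLpNorm u₀ (ENNReal.ofReal p) μ := by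
    rw [hmap, eLpNorm_smul_measure_of_ne_zero ((ENNReal.ofReal_pos.mpr hpos).ne') u₀ _ μ,
      smul_eq_mul]
    congr 1
    rw [one_div, ENNReal.toReal_inv, ENNReal.toReal_ofReal hp0.le,
      ENNReal.ofReal_rpow_of_pos hpos, ← Real.rpow_mul hc.le]
    rw [div_eq_mul_inv]
  have hsm' : AEStronglyMeasurable (fun x => u₀ (c * x)) μ :=
    hsm.comp_aemeasurable (measurable_const_mul c).aemeasurable
  refine ⟨⟨hsm', ?_⟩, hcomp.trans hsmul⟩
  rw [hcomp, hsmul]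
  exact ENNReal.mul_lt_top ENNReal.ofReal_lt_top hu₀.2

theorem stmt_2 (b g α q p : ℝ) (hb : 0 < b) (hg : 0 < g) (hα : 1 < α) (hp : 1 ≤ p)
    (u₀ : ℝ → ℝ)
    (μ : Measure ℝ)
    (hμ : μ = (volume.restrict (Set.Ioi (0:ℝ))).withDensity fun x => ENNReal.ofReal (x ^ q))
    (hu₀ : MemLp u₀ (ENNReal.ofReal p) μ) :
    ∀ u : ℝ → ℝ → ℝ,
      (u = fun t x => Real.exp (-(b + g) * t) *
        ∑' k : ℕ, u₀ (α ^ k * x * Real.exp (-g * t)) * (b * α ^ 2 * t) ^ k / (Nat.factorial k)) →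
      ∀ t ≥ (0:ℝ),
        MemLp (u t) (ENNReal.ofReal p) μ ∧
        Tendsto (fun N : ℕ =>
            eLpNorm (fun x => u t x - Real.exp (-(b + g) * t) *
              ∑ k ∈ Finset.range N,
                u₀ (α ^ k * x * Real.exp (-g * t)) * (b * α ^ 2 * t) ^ k / (Nat.factorial k))
              (ENNReal.ofReal p) μ) atTop (nhds 0) ∧
        eLpNorm (u t) (ENNReal.ofReal p) μ ≤
          ENNReal.ofReal (Real.exp (-(b + g) * t) * Real.exp (g * (q + 1) * t / p) *
              Real.exp (b * α ^ 2 * t * α ^ (-(q + 1) / p))) *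
            eLpNorm u₀ (ENNReal.ofReal p) μ := by
  intro u hu t ht
  have hp0 : 0 < p := lt_of_lt_of_le one_pos hp
  have hP0 : (ENNReal.ofReal p) ≠ 0 := (ENNReal.ofReal_pos.mpr hp0).ne'
  have hPt : (ENNReal.ofReal p) ≠ ⊤ := ENNReal.ofReal_ne_top
  have hα0 : (0:ℝ) < α := lt_trans one_pos hα
  set c : ℕ → ℝ := fun k => α ^ k * Real.exp (-g * t) with hcdef
  have hc : ∀ k, 0 < c k := fun k => mul_pos (pow_pos hα0 k) (Real.exp_pos _)
  set a : ℕ → ℝ := fun k => (b * α ^ 2 * t) ^ k / (Nat.factorial k : ℝ) with hadef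
  have hbt : (0:ℝ) ≤ b * α ^ 2 * t := by positivity
  have ha : ∀ k, 0 ≤ a k := fun k =>
    div_nonneg (pow_nonneg hbt k) (Nat.cast_nonneg _)
  set f : ℕ → ℝ → ℝ := fun k x => u₀ (c k * x) * a k with hfdef
  have hscale := fun k => scale_aux hp hμ hu₀ (hc k)
  have hfsm : ∀ k, AEStronglyMeasurable (f k) μ := fun k => ((hscale k).1.1).mul_const (a k)
  have hfk : ∀ k, f k = a k • (fun x => u₀ (c k * x)) := fun k =>
    funext fun x => by simp [hfdef, smul_eq_mul, mul_comm]
  have hfmem : ∀ k, MemLp (f k) (ENNReal.ofReal p) μ := fun k => by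
    rw [hfk k]; exact ((hscale k).1).const_smul (a k)
  set M : ℕ → ℝ≥0∞ := fun k => eLpNorm (f k) (ENNReal.ofReal p) μ with hMdef
  set N₀ := eLpNorm u₀ (ENNReal.ofReal p) μ with hN
  set r : ℕ → ℝ := fun k => a k * (c k) ^ (-(q+1)/p) with hrdef
  have hrnn : ∀ k, 0 ≤ r k := fun k =>
    mul_nonneg (ha k) (Real.rpow_pos_of_pos (hc k) _).le
  have hMk : ∀ k, M k = ENNReal.ofReal (r k) * N₀ := by
    intro k
    rw [hMdef]
    simp only
    rw [hfk k, eLpNorm_const_smul, (hscale k).2, Real.enorm_eq_ofReal (ha k),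
      ← mul_assoc, ← ENNReal.ofReal_mul (ha k)]
  -- compute r k explicitly
  have hcs : ∀ k, (c k) ^ (-(q+1)/p)
      = (α ^ (-(q+1)/p)) ^ k * Real.exp (g * (q + 1) * t / p) := by
    intro k
    rw [hcdef]
    simp only
    rw [Real.mul_rpow (by positivity) (Real.exp_pos _).le]
    congr 1
    · rw [← Real.rpow_natCast α k, ← Real.rpow_mul hα0.le, mul_comm,
        Real.rpow_mul hα0.le, Real.rpow_natCast]
    · rw [Real.rpow_def_of_pos (Real.exp_pos _), Real.log_exp]
      congr 1
      field_simp
  have hrk : ∀ k, r k = Real.exp (g * (q + 1) * t / p) *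
      ((b * α ^ 2 * t * α ^ (-(q+1)/p)) ^ k / (Nat.factorial k : ℝ)) := by
    intro k
    rw [hrdef]
    simp only
    rw [hcs k, hadef]
    simp only
    rw [mul_pow]
    ring
  have hsummable : Summable r :=
    ((Real.summable_pow_div_factorial (b * α ^ 2 * t * α ^ (-(q+1)/p))).mul_left
      (Real.exp (g * (q + 1) * t / p))).congr fun k => (hrk k).symm
  have htsum_r : ∑' k, r k = Real.exp (g * (q + 1) * t / p) *
      Real.exp (b * α ^ 2 * t * α ^ (-(q+1)/p)) := by
    rw [tsum_congr hrk, tsum_mul_left]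
    congr 1
    rw [Real.exp_eq_exp_ℝ, NormedSpace.exp_eq_tsum_div]
  have hK : ∑' k, M k = ENNReal.ofReal (Real.exp (g * (q + 1) * t / p) *
      Real.exp (b * α ^ 2 * t * α ^ (-(q+1)/p))) * N₀ := by
    rw [tsum_congr hMk, ENNReal.tsum_mul_right,
      ← ENNReal.ofReal_tsum_of_nonneg hrnn hsummable, htsum_r]
  have hN₀top : N₀ ≠ ⊤ := hu₀.2.ne
  have hKtop : ∑' k, M k ≠ ⊤ := by
    rw [hK]; exact (ENNReal.mul_lt_top ENNReal.ofReal_lt_top hu₀.2).ne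
  -- core bound
  have hcore : ∀ n : ℕ, ∫⁻ x, (∑' k, (‖f (k + n) x‖₊ : ℝ≥0∞)) ^ p ∂μ
      ≤ (∑' k, M (k + n)) ^ p := fun n =>
    lint_tsum_le μ p hp (fun k => f (k + n)) (fun k => hfsm _)
  have hGmeas : AEMeasurable (fun x => ∑' k, (‖f k x‖₊ : ℝ≥0∞)) μ :=
    AEMeasurable.ennreal_tsum fun k => (hfsm k).enorm
  have hae : ∀ᵐ x ∂μ, Summable fun k => ‖f k x‖₊ := by
    have h0 := hcore 0
    simp only [add_zero] at h0
    have hfin : ∫⁻ x, (∑' k, (‖f k x‖₊ : ℝ≥0∞)) ^ p ∂μ ≠ ⊤ :=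
      (h0.trans_lt (ENNReal.rpow_lt_top_of_nonneg hp0.le hKtop)).ne
    filter_upwards [ae_lt_top' (hGmeas.pow_const p) hfin] with x hx
    by_contra hcon
    have htop : (∑' k, (‖f k x‖₊ : ℝ≥0∞)) = ⊤ := by
      by_contra h'
      exact hcon (ENNReal.tsum_coe_ne_top_iff_summable.mp h')
    rw [htop, ENNReal.top_rpow_of_pos hp0] at hx
    exact absurd hx (lt_irrefl ⊤)
  set T : ℝ → ℝ := fun x => ∑' k, f k x with hTdef
  set S : ℕ → ℝ → ℝ := fun n x => ∑ k ∈ Finset.range n, f k x with hSdef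
  have hae2 : ∀ᵐ x ∂μ, ∀ n : ℕ, (‖T x - S n x‖₊ : ℝ≥0∞) ≤ ∑' k, (‖f (k + n) x‖₊ : ℝ≥0∞) := by
    filter_upwards [hae] with x hx
    intro n
    have hsnorm : Summable fun k => ‖f k x‖ := NNReal.summable_coe.mpr hx
    have hsnormn : Summable fun k => ‖f (k + n) x‖ := (summable_nat_add_iff n).mpr hsnorm
    have hsf : Summable fun k => f k x := Summable.of_nnnorm hx
    have heq : T x - S n x = ∑' k, f (k + n) x := by
      have h := Summable.sum_add_tsum_nat_add (f := fun k => f k x) n hsf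
      rw [hTdef, hSdef]
      simp only
      linarith
    rw [heq, ← enorm_eq_nnnorm, ← ofReal_norm]
    refine le_trans (ENNReal.ofReal_le_ofReal (norm_tsum_le_tsum_norm hsnormn)) ?_
    rw [ENNReal.ofReal_tsum_of_nonneg (fun k => norm_nonneg _) hsnormn]
    exact le_of_eq (tsum_congr fun k => ofReal_norm _)
  have hSsm : ∀ n, AEStronglyMeasurable (S n) μ := by
    intro n
    rw [hSdef]
    exact Finset.aestronglyMeasurable_fun_sum (Finset.range n) fun i _ => hfsm i
  have hTsm : AEStronglyMeasurable T μ := by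
    refine aestronglyMeasurable_of_tendsto_ae atTop hSsm ?_
    filter_upwards [hae] with x hx
    exact (Summable.of_nnnorm hx).hasSum.tendsto_sum_nat
  have hbound : ∀ n, eLpNorm (fun x => T x - S n x) (ENNReal.ofReal p) μ ≤ ∑' k, M (k + n) := by
    intro n
    rw [eLpNorm_eq_lintegral_rpow_enorm_toReal hP0 hPt, ENNReal.toReal_ofReal hp0.le]
    have h1 : ∫⁻ x, ((‖T x - S n x‖₊ : ℝ≥0∞)) ^ p ∂μ ≤ (∑' k, M (k + n)) ^ p := by
      refine le_trans (lintegral_mono_ae ?_) (hcore n)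
      filter_upwards [hae2] with x hx
      exact ENNReal.rpow_le_rpow (hx n) hp0.le
    calc (∫⁻ x, ((‖T x - S n x‖₊ : ℝ≥0∞)) ^ p ∂μ) ^ (1 / p)
        ≤ ((∑' k, M (k + n)) ^ p) ^ (1 / p) := ENNReal.rpow_le_rpow h1 (by positivity)
      _ = ∑' k, M (k + n) := by
          rw [← ENNReal.rpow_mul, mul_one_div, div_self hp0.ne', ENNReal.rpow_one]
  have hT0 : eLpNorm T (ENNReal.ofReal p) μ ≤ ∑' k, M k := by
    have h := hbound 0
    simp only [hSdef, Finset.range_zero, Finset.sum_empty, sub_zero, add_zero] at h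
    exact h
  have hTmem : MemLp T (ENNReal.ofReal p) μ := ⟨hTsm, lt_of_le_of_lt hT0 hKtop.lt_top⟩
  have hterm : ∀ (k : ℕ) (x : ℝ), u₀ (α ^ k * x * Real.exp (-g * t)) * (b * α ^ 2 * t) ^ k
      / (Nat.factorial k : ℝ) = f k x := by
    intro k x
    rw [hfdef]
    simp only
    rw [mul_div_assoc, hadef]
    simp only
    congr 2
    rw [hcdef]
    ring
  have hut : u t = fun x => Real.exp (-(b + g) * t) * T x := by
    rw [hu]
    funext x
    simp only
    rw [hTdef]
    congr 1
    exact tsum_congr fun k => hterm k x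
  refine ⟨?_, ?_, ?_⟩
  · rw [hut]
    exact hTmem.const_mul _
  · have heq : ∀ n : ℕ, (fun x => u t x - Real.exp (-(b + g) * t) *
        ∑ k ∈ Finset.range n,
          u₀ (α ^ k * x * Real.exp (-g * t)) * (b * α ^ 2 * t) ^ k / (Nat.factorial k : ℝ))
        = Real.exp (-(b + g) * t) • (fun x => T x - S n x) := by
      intro n
      funext x
      rw [hut]
      simp only [Pi.smul_apply, smul_eq_mul]
      have hSx : ∑ k ∈ Finset.range n,
          u₀ (α ^ k * x * Real.exp (-g * t)) * (b * α ^ 2 * t) ^ k / (Nat.factorial k : ℝ)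
          = S n x := by
        rw [hSdef]; exact Finset.sum_congr rfl fun k _ => hterm k x
      rw [hSx]
      ring
    simp only [heq, eLpNorm_const_smul]
    have h1 : Tendsto (fun n : ℕ => (‖Real.exp (-(b + g) * t)‖₊ : ℝ≥0∞) * ∑' k, M (k + n))
        atTop (nhds 0) := by
      have h2 := ENNReal.Tendsto.const_mul (ENNReal.tendsto_sum_nat_add M hKtop)
        (Or.inr ENNReal.coe_ne_top : (0:ℝ≥0∞) ≠ 0 ∨ ((‖Real.exp (-(b + g) * t)‖₊ : ℝ≥0∞)) ≠ ⊤)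
      simpa using h2
    refine tendsto_of_tendsto_of_tendsto_of_le_of_le tendsto_const_nhds h1
      (fun n => zero_le) (fun n => ?_)
    exact mul_le_mul_right (hbound n) _
  · rw [hut]
    have hsm2 : (fun x => Real.exp (-(b + g) * t) * T x) = Real.exp (-(b + g) * t) • T := rfl
    rw [hsm2, eLpNorm_const_smul, Real.enorm_eq_ofReal (Real.exp_nonneg _)]
    calc ENNReal.ofReal (Real.exp (-(b + g) * t)) * eLpNorm T (ENNReal.ofReal p) μ
        ≤ ENNReal.ofReal (Real.exp (-(b + g) * t)) * ∑' k, M k := mul_le_mul_right hT0 _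
      _ = ENNReal.ofReal (Real.exp (-(b + g) * t) * Real.exp (g * (q + 1) * t / p) *
            Real.exp (b * α ^ 2 * t * α ^ (-(q + 1) / p))) * N₀ := by
          rw [hK, ← mul_assoc, ← ENNReal.ofReal_mul (Real.exp_nonneg _)]
          congr 2
          ring
end

section
/- Let α > 1, x₀ ∈ (1/α, 1], x₁ ∈ (x₀, 1], and let u₀ be supported in [x₀, x₁]. Then for the explicit solution u(t,·) of the critical growth-fragmentation equation, for every t > 0 and every k ∈ ℕ, u(t,x) = 0 for all x in the open interval (α^{-k-1} e^{gt}, α^{-k} x₀ e^{gt}). -/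
open MeasureTheory Real

theorem stmt_6 (b g α x₀ x₁ : ℝ) (hb : 0 < b) (hg : 0 < g) (hα : 1 < α)
    (hx₀ : x₀ ∈ Set.Ioc (1 / α) 1) (hx₁ : x₁ ∈ Set.Ioc x₀ 1)
    (u₀ : ℝ → ℝ) (hsupp : Function.support u₀ ⊆ Set.Icc x₀ x₁) :
    ∀ u : ℝ → ℝ → ℝ,
      (u = fun t x => Real.exp (-(b + g) * t) *
        ∑' k : ℕ, u₀ (α ^ k * x * Real.exp (-g * t)) * (b * α ^ 2 * t) ^ k / (Nat.factorial k)) →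
      ∀ t > (0:ℝ), ∀ k : ℕ,
        ∀ x ∈ Set.Ioo (α ^ (-(k:ℝ) - 1) * Real.exp (g * t))
          (α ^ (-(k:ℝ)) * x₀ * Real.exp (g * t)), u t x = 0 := by
  intro u hu t ht k x hx
  subst hu
  have hα0 : (0:ℝ) < α := lt_trans one_pos hα
  have hE : (0:ℝ) < Real.exp (g * t) := Real.exp_pos _
  have hEneg : Real.exp (-g * t) = (Real.exp (g * t))⁻¹ := by
    rw [← Real.exp_neg]; ring_nf
  have hrk : α ^ (-(k:ℝ)) = (α ^ k : ℝ)⁻¹ := by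
    rw [← Real.rpow_natCast α k, ← Real.rpow_neg hα0.le]
  have hrk1 : α ^ (-(k:ℝ) - 1) = (α ^ (k+1) : ℝ)⁻¹ := by
    rw [← Real.rpow_natCast α (k+1), ← Real.rpow_neg hα0.le]
    push_cast; ring_nf
  have key : ∀ j : ℕ, u₀ (α ^ j * x * Real.exp (-g * t)) = 0 := by
    intro j
    have hpowpos : ∀ m : ℕ, (0:ℝ) < α ^ m := fun m => pow_pos hα0 m
    have hy : α ^ j * x * Real.exp (-g * t) ∉ Set.Icc x₀ x₁ := by
      rcases le_or_gt j k with hjk | hjk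
      · -- value < x₀
        intro hmem
        have h2 := hx.2
        rw [hrk] at h2
        have hlt : α ^ j * x * Real.exp (-g * t)
            < α ^ j * ((α ^ k)⁻¹ * x₀ * Real.exp (g * t)) * Real.exp (-g * t) := by
          have := mul_lt_mul_of_pos_left h2 (hpowpos j)
          exact mul_lt_mul_of_pos_right this (Real.exp_pos _)
        have heq : α ^ j * ((α ^ k)⁻¹ * x₀ * Real.exp (g * t)) * Real.exp (-g * t)
            = α ^ j / α ^ k * x₀ := by
          rw [hEneg]; field_simp
        rw [heq] at hlt
        have hle : α ^ j / α ^ k ≤ 1 := by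
          rw [div_le_one (hpowpos k)]
          exact pow_le_pow_right₀ hα.le hjk
        have hx₀pos : 0 < x₀ := lt_trans (by positivity) hx₀.1
        have : α ^ j * x * Real.exp (-g * t) < x₀ := by
          calc α ^ j * x * Real.exp (-g * t) < α ^ j / α ^ k * x₀ := hlt
            _ ≤ 1 * x₀ := mul_le_mul_of_nonneg_right hle hx₀pos.le
            _ = x₀ := one_mul _
        exact absurd hmem.1 (not_le.mpr this)
      · -- value > x₁
        intro hmem
        have h1 := hx.1
        rw [hrk1] at h1
        have hgt : α ^ j * ((α ^ (k+1))⁻¹ * Real.exp (g * t)) * Real.exp (-g * t)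
            < α ^ j * x * Real.exp (-g * t) := by
          have := mul_lt_mul_of_pos_left h1 (hpowpos j)
          exact mul_lt_mul_of_pos_right this (Real.exp_pos _)
        have heq : α ^ j * ((α ^ (k+1))⁻¹ * Real.exp (g * t)) * Real.exp (-g * t)
            = α ^ j / α ^ (k+1) := by
          rw [hEneg]; field_simp
        rw [heq] at hgt
        have hge : (1:ℝ) ≤ α ^ j / α ^ (k+1) := by
          rw [le_div_iff₀ (hpowpos (k+1)), one_mul]
          exact pow_le_pow_right₀ hα.le hjk
        have : x₁ < α ^ j * x * Real.exp (-g * t) :=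
          lt_of_le_of_lt (le_trans hx₁.2 hge) hgt
        exact absurd hmem.2 (not_le.mpr this)
    exact Function.notMem_support.mp (fun h => hy (hsupp h))
  have key' : ∀ j : ℕ, u₀ (α ^ j * x * Real.exp (-(g * t))) = 0 := by
    intro j; rw [show -(g*t) = -g*t by ring]; exact key j
  simp [key']
end

section
/- Let α > 1 and let u₀ : ℝ → ℝ be continuous with compact support in (0,∞), and let v(t,x) = e^{-t} ∑_{k=0}^∞ u₀(α^k x) (α²t)^k / k!. Define r(t,y) = t e^{2ty} v(t, e^{ty}) for t > 0, y ∈ ℝ. Then for every t > 0, ∫_{-∞}^{∞} r(t,y) dy = ∫₀^∞ x v(t,x) dx = ∫₀^∞ x u₀(x) dx. -/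
open MeasureTheory Real

lemma scale_aux_s8 (g : ℝ → ℝ) {c : ℝ} (hc : 0 < c) :
    (∫ x in Set.Ioi (0:ℝ), x * g (c * x)) =
      c⁻¹ * (c⁻¹ * ∫ x in Set.Ioi (0:ℝ), x * g x) := by
  have h := integral_comp_mul_left_Ioi (fun x => x * g x) 0 hc
  simp only [mul_zero, smul_eq_mul] at h
  have h2 : (∫ x in Set.Ioi (0:ℝ), c * x * g (c * x))
      = c * ∫ x in Set.Ioi (0:ℝ), x * g (c * x) := by
    rw [← integral_const_mul]
    congr 1; ext x; ring
  calc (∫ x in Set.Ioi (0:ℝ), x * g (c * x))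
      = c⁻¹ * (c * ∫ x in Set.Ioi (0:ℝ), x * g (c * x)) := by
        rw [← mul_assoc, inv_mul_cancel₀ hc.ne', one_mul]
    _ = c⁻¹ * (c⁻¹ * ∫ x in Set.Ioi (0:ℝ), x * g x) := by rw [← h2, h]

theorem stmt_8 (α : ℝ) (hα : 1 < α)
    (u₀ : ℝ → ℝ) (hcont : Continuous u₀) (hcs : HasCompactSupport u₀)
    (hsupp : tsupport u₀ ⊆ Set.Ioi 0) :
    ∀ v : ℝ → ℝ → ℝ,
      (v = fun t x => Real.exp (-t) *
        ∑' k : ℕ, u₀ (α ^ k * x) * (α ^ 2 * t) ^ k / (Nat.factorial k)) →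
      ∀ t > (0:ℝ),
        (∫ y : ℝ, t * Real.exp (2 * t * y) * v t (Real.exp (t * y)))
            = (∫ x in Set.Ioi (0:ℝ), x * v t x) ∧
        (∫ x in Set.Ioi (0:ℝ), x * v t x) = (∫ x in Set.Ioi (0:ℝ), x * u₀ x) := by
  intro v hv t ht
  have hα0 : (0:ℝ) < α := lt_trans one_pos hα
  have hαk : ∀ k : ℕ, (0:ℝ) < α ^ k := fun k => pow_pos hα0 k
  -- the second equality
  have h2 : (∫ x in Set.Ioi (0:ℝ), x * v t x) = ∫ x in Set.Ioi (0:ℝ), x * u₀ x := by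
    set C := ∫ x in Set.Ioi (0:ℝ), x * u₀ x with hCdef
    set D := ∫ x in Set.Ioi (0:ℝ), x * |u₀ x| with hDdef
    set F : ℕ → ℝ → ℝ :=
      fun k x => (Real.exp (-t) * ((α ^ 2 * t) ^ k / (Nat.factorial k))) *
        (x * u₀ (α ^ k * x)) with hF
    have hcomp : ∀ k : ℕ, HasCompactSupport (fun x => x * u₀ (α ^ k * x)) := by
      intro k
      have h1 : HasCompactSupport (fun x => u₀ (α ^ k * x)) := by
        have := hcs.comp_isClosedEmbedding
          (g := fun x : ℝ => α ^ k * x)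
          (Homeomorph.mulLeft₀ (α ^ k) (hαk k).ne').isClosedEmbedding
        exact this
      exact h1.mul_left (f := fun x : ℝ => x)
    have hcontk : ∀ k : ℕ, Continuous (fun x => x * u₀ (α ^ k * x)) := fun k =>
      continuous_id.mul (hcont.comp (continuous_const.mul continuous_id))
    have hFint : ∀ k : ℕ, Integrable (F k) (volume.restrict (Set.Ioi (0:ℝ))) := by
      intro k
      exact (((hcontk k).integrable_of_hasCompactSupport (hcomp k)).integrableOn).const_mul _
    have hconstk : ∀ k : ℕ, (0:ℝ) ≤ Real.exp (-t) * ((α ^ 2 * t) ^ k / (Nat.factorial k)) := by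
      intro k
      positivity
    have hpowk : ∀ k : ℕ, Real.exp (-t) * ((α ^ 2 * t) ^ k / (Nat.factorial k)) *
        ((α ^ k)⁻¹ * ((α ^ k)⁻¹ * 1)) = Real.exp (-t) * (t ^ k / (Nat.factorial k)) := by
      intro k
      have hk : (α ^ k : ℝ) ≠ 0 := (hαk k).ne'
      have hfac : ((Nat.factorial k : ℝ)) ≠ 0 := Nat.cast_ne_zero.mpr (Nat.factorial_ne_zero k)
      rw [mul_pow, ← pow_mul, mul_comm 2 k, pow_mul]
      field_simp
    -- integral of norms
    have hnormint : ∀ k : ℕ, (∫ x in Set.Ioi (0:ℝ), ‖F k x‖)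
        = (Real.exp (-t) * D) * (t ^ k / (Nat.factorial k)) := by
      intro k
      have hcongr : (∫ x in Set.Ioi (0:ℝ), ‖F k x‖)
          = ∫ x in Set.Ioi (0:ℝ),
              (Real.exp (-t) * ((α ^ 2 * t) ^ k / (Nat.factorial k))) *
                (x * |u₀ (α ^ k * x)|) := by
        apply setIntegral_congr_fun measurableSet_Ioi
        intro x hx
        have hx0 : (0:ℝ) < x := hx
        simp only [hF, Real.norm_eq_abs, abs_mul, abs_of_nonneg (hconstk k),
          abs_of_pos hx0]
      rw [hcongr, integral_const_mul, scale_aux_s8 (fun x => |u₀ x|) (hαk k)]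
      have := hpowk k
      have hconst : Real.exp (-t) * ((α ^ 2 * t) ^ k / (Nat.factorial k)) *
          ((α ^ k)⁻¹ * ((α ^ k)⁻¹ * D)) = Real.exp (-t) * D * (t ^ k / (Nat.factorial k)) := by
        have hk : (α ^ k : ℝ) ≠ 0 := (hαk k).ne'
        have hfac : ((Nat.factorial k : ℝ)) ≠ 0 := Nat.cast_ne_zero.mpr (Nat.factorial_ne_zero k)
        rw [mul_pow, ← pow_mul, mul_comm 2 k, pow_mul]
        field_simp
      exact hconst
    have hF_sum : Summable fun k : ℕ => ∫ x in Set.Ioi (0:ℝ), ‖F k x‖ := by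
      rw [funext hnormint]
      exact (Real.summable_pow_div_factorial t).mul_left _
    have hswap := integral_tsum_of_summable_integral_norm hFint hF_sum
    -- pointwise identity
    have hpt : ∀ x : ℝ, (∑' k : ℕ, F k x) = x * v t x := by
      intro x
      rw [hv]
      simp only
      rw [← mul_assoc, ← tsum_mul_left]
      exact tsum_congr fun k => by simp only [hF]; ring
    -- value of each integral
    have hterm : ∀ k : ℕ, (∫ x in Set.Ioi (0:ℝ), F k x)
        = (Real.exp (-t) * C) * (t ^ k / (Nat.factorial k)) := by
      intro k
      simp only [hF]
      rw [integral_const_mul, scale_aux_s8 u₀ (hαk k)]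
      have hk : (α ^ k : ℝ) ≠ 0 := (hαk k).ne'
      have hfac : ((Nat.factorial k : ℝ)) ≠ 0 := Nat.cast_ne_zero.mpr (Nat.factorial_ne_zero k)
      rw [mul_pow, ← pow_mul, mul_comm 2 k, pow_mul]
      field_simp
      ring
    have hsum : (∑' k : ℕ, (Real.exp (-t) * C) * (t ^ k / (Nat.factorial k))) = C := by
      rw [tsum_mul_left]
      have hexp : (∑' k : ℕ, (t ^ k / (Nat.factorial k) : ℝ)) = Real.exp t := by
        rw [Real.exp_eq_exp_ℝ, NormedSpace.exp_eq_tsum_div]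
      rw [hexp]
      have h1 : Real.exp (-t) * Real.exp t = 1 := by rw [← Real.exp_add]; simp
      linear_combination C * h1
    calc (∫ x in Set.Ioi (0:ℝ), x * v t x)
        = ∫ x in Set.Ioi (0:ℝ), ∑' k : ℕ, F k x := by
          apply setIntegral_congr_fun measurableSet_Ioi
          intro x _
          exact (hpt x).symm
      _ = ∑' k : ℕ, ∫ x in Set.Ioi (0:ℝ), F k x := hswap.symm
      _ = ∑' k : ℕ, (Real.exp (-t) * C) * (t ^ k / (Nat.factorial k)) :=
          tsum_congr hterm
      _ = C := hsum
  refine ⟨?_, h2⟩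
  -- the first equality: change of variables y ↦ exp (t y)
  have hne : t ≠ 0 := ht.ne'
  have hd : ∀ y : ℝ, HasDerivWithinAt (fun y => Real.exp (t * y))
      (t * Real.exp (t * y)) Set.univ y := by
    intro y
    have h1 : HasDerivAt (fun y : ℝ => t * y) t y := by
      simpa using (hasDerivAt_id y).const_mul t
    have h2 := (Real.hasDerivAt_exp (t * y)).comp y h1
    have h3 : HasDerivAt (fun y => Real.exp (t * y)) (t * Real.exp (t * y)) y := by
      simpa [Function.comp_def, mul_comm] using h2
    exact h3.hasDerivWithinAt
  have hinj : Set.InjOn (fun y => Real.exp (t * y)) Set.univ := by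
    intro a _ b _ h
    exact mul_left_cancel₀ hne (Real.exp_injective h)
  have himg : (fun y => Real.exp (t * y)) '' Set.univ = Set.Ioi 0 := by
    rw [Set.image_univ]
    ext x
    constructor
    · rintro ⟨y, rfl⟩; exact Real.exp_pos _
    · intro hx
      refine ⟨Real.log x / t, ?_⟩
      show Real.exp (t * (Real.log x / t)) = x
      have hl : t * (Real.log x / t) = Real.log x := by field_simp
      rw [hl, Real.exp_log hx]
  have hchg := integral_image_eq_integral_abs_deriv_smul MeasurableSet.univ
    (fun y _ => hd y) hinj (fun x => x * v t x)
  rw [himg] at hchg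
  rw [hchg, Measure.restrict_univ]
  congr 1
  ext y
  have h1 : |t * Real.exp (t * y)| = t * Real.exp (t * y) :=
    abs_of_pos (mul_pos ht (Real.exp_pos _))
  have h2y : (2 * t) * y = t * y + t * y := by ring
  rw [smul_eq_mul, h1, h2y, Real.exp_add]
  ring
end

section
/- Let α > 1 and u₀ nonnegative, measurable, with ∫₀^∞ x u₀(x) dx < ∞. For v(t,x) = e^{-t} ∑_{k=0}^∞ u₀(α^k x)(α²t)^k/k!, the first moment is conserved: ∫₀^∞ x v(t,x) dx = ∫₀^∞ x u₀(x) dx for all t ≥ 0. -/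
open MeasureTheory Real

/-- Scaling lemma: for `c > 0`, `∫⁻ x in Ioi 0, g (c * x) = ofReal c⁻¹ * ∫⁻ y in Ioi 0, g y`. -/
lemma lint_scale {g : ℝ → ENNReal} (hg : Measurable g) {c : ℝ} (hc : 0 < c) :
    ∫⁻ x in Set.Ioi (0:ℝ), g (c * x) = ENNReal.ofReal c⁻¹ * ∫⁻ y in Set.Ioi (0:ℝ), g y := by
  have hind : Measurable ((Set.Ioi (0:ℝ)).indicator g) :=
    hg.indicator measurableSet_Ioi
  have h1 : ∫⁻ x in Set.Ioi (0:ℝ), g (c * x)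
      = ∫⁻ x, (Set.Ioi (0:ℝ)).indicator g (c * x) := by
    rw [← lintegral_indicator measurableSet_Ioi]
    congr 1
    funext x
    by_cases hx : x ∈ Set.Ioi (0:ℝ)
    · rw [Set.indicator_of_mem hx, Set.indicator_of_mem (by exact mul_pos hc hx)]
    · rw [Set.indicator_of_notMem hx, Set.indicator_of_notMem]
      simp only [Set.mem_Ioi, not_lt] at hx ⊢
      exact mul_nonpos_of_nonneg_of_nonpos hc.le hx
  have h2 : ∫⁻ x, (Set.Ioi (0:ℝ)).indicator g (c * x)
      = ∫⁻ y, (Set.Ioi (0:ℝ)).indicator g y ∂(Measure.map (c * ·) volume) :=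
    (lintegral_map hind (measurable_const_mul c)).symm
  rw [h1, h2, Real.map_volume_mul_left (ne_of_gt hc), lintegral_smul_measure,
    lintegral_indicator measurableSet_Ioi _, abs_of_pos (inv_pos.mpr hc), smul_eq_mul]

theorem stmt_9 (α : ℝ) (hα : 1 < α)
    (u₀ : ℝ → ℝ) (hmeas : Measurable u₀) (hpos : ∀ x, 0 ≤ u₀ x)
    (hfin : ∫⁻ x in Set.Ioi (0:ℝ), ENNReal.ofReal (x * u₀ x) < ⊤) :
    ∀ v : ℝ → ℝ → ℝ,
      (v = fun t x => Real.exp (-t) *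
        ∑' k : ℕ, u₀ (α ^ k * x) * (α ^ 2 * t) ^ k / (Nat.factorial k)) →
      ∀ t ≥ (0:ℝ),
        ∫⁻ x in Set.Ioi (0:ℝ), ENNReal.ofReal (x * v t x)
          = ∫⁻ x in Set.Ioi (0:ℝ), ENNReal.ofReal (x * u₀ x) := by
  intro v hv t ht
  subst hv
  have hα0 : (0:ℝ) < α := lt_trans one_pos hα
  set M : ENNReal := ∫⁻ x in Set.Ioi (0:ℝ), ENNReal.ofReal (x * u₀ x) with hM
  -- the k-th term as an ENNReal function
  set F : ℕ → ℝ → ENNReal :=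
    fun k x => ENNReal.ofReal (x * (u₀ (α ^ k * x) * (α ^ 2 * t) ^ k / (Nat.factorial k)))
    with hF
  have hck : ∀ k : ℕ, (0:ℝ) ≤ (α ^ 2 * t) ^ k / (Nat.factorial k) := by
    intro k
    apply div_nonneg (pow_nonneg (mul_nonneg (sq_nonneg α) ht) k)
    positivity
  have hFmeas : ∀ k, Measurable (F k) := by
    intro k
    exact (measurable_id.mul
      (((hmeas.comp (measurable_const_mul (α ^ k))).mul_const _).div_const _)).ennreal_ofReal
  have hgmeas : Measurable (fun y : ℝ => ENNReal.ofReal (y * u₀ y)) :=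
    (measurable_id.mul hmeas).ennreal_ofReal
  -- integral of each term
  have hFk : ∀ k : ℕ,
      ∫⁻ x in Set.Ioi (0:ℝ), F k x = ENNReal.ofReal (t ^ k / (Nat.factorial k)) * M := by
    intro k
    have hαk : (0:ℝ) < α ^ k := pow_pos hα0 k
    have key : ∀ x : ℝ, F k x
        = ENNReal.ofReal ((α ^ 2 * t) ^ k / (Nat.factorial k) * (α ^ k)⁻¹)
          * ENNReal.ofReal ((α ^ k * x) * u₀ (α ^ k * x)) := by
      intro x
      rw [← ENNReal.ofReal_mul (mul_nonneg (hck k) (inv_nonneg.mpr hαk.le))]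
      have h0 : (α ^ 2 * t) ^ k / (Nat.factorial k : ℝ) * (α ^ k)⁻¹ * (α ^ k * x * u₀ (α ^ k * x))
          = ((α ^ k)⁻¹ * α ^ k) *
            (x * (u₀ (α ^ k * x) * (α ^ 2 * t) ^ k / (Nat.factorial k))) := by ring
      rw [h0, inv_mul_cancel₀ (ne_of_gt hαk), one_mul]
    simp_rw [key]
    have hcomp : Measurable fun x : ℝ => ENNReal.ofReal (α ^ k * x * u₀ (α ^ k * x)) :=
      hgmeas.comp (measurable_const_mul (α ^ k))
    rw [lintegral_const_mul _ hcomp]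
    have step : ∫⁻ x in Set.Ioi (0:ℝ), ENNReal.ofReal (α ^ k * x * u₀ (α ^ k * x))
        = ENNReal.ofReal (α ^ k)⁻¹ * M := by
      simpa using lint_scale hgmeas hαk
    rw [step, ← mul_assoc,
      ← ENNReal.ofReal_mul (mul_nonneg (hck k) (inv_nonneg.mpr hαk.le))]
    congr 2
    have h1 : (α ^ 2 * t) ^ k = (α ^ k) ^ 2 * t ^ k := by ring
    rw [h1]
    field_simp
  -- sum of integrals
  have hsum_int : ∫⁻ x in Set.Ioi (0:ℝ), (∑' k, F k x) = ENNReal.ofReal (Real.exp t) * M := by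
    rw [lintegral_tsum (fun k => (hFmeas k).aemeasurable)]
    simp_rw [hFk]
    rw [ENNReal.tsum_mul_right]
    congr 1
    rw [← ENNReal.ofReal_tsum_of_nonneg
      (fun k => div_nonneg (pow_nonneg ht k) (by positivity))
      (Real.summable_pow_div_factorial t)]
    congr 1
    have : Real.exp t = ∑' n : ℕ, t ^ n / (Nat.factorial n) := by
      rw [Real.exp_eq_exp_ℝ, NormedSpace.exp_eq_tsum_div]
    rw [this]
  have hTmeas : Measurable (fun x : ℝ => ∑' k, F k x) :=
    Measurable.ennreal_tsum hFmeas
  -- a.e. pointwise identity on Ioi 0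
  have hae : ∀ᵐ x ∂(volume.restrict (Set.Ioi (0:ℝ))),
      ENNReal.ofReal (x * (Real.exp (-t) *
        ∑' k : ℕ, u₀ (α ^ k * x) * (α ^ 2 * t) ^ k / (Nat.factorial k)))
        = ENNReal.ofReal (Real.exp (-t)) * ∑' k, F k x := by
    have hlt : ∀ᵐ x ∂(volume.restrict (Set.Ioi (0:ℝ))), (∑' k, F k x) < ⊤ := by
      apply ae_lt_top hTmeas
      rw [hsum_int]
      exact ENNReal.mul_ne_top ENNReal.ofReal_ne_top hfin.ne
    have hmem : ∀ᵐ x ∂(volume.restrict (Set.Ioi (0:ℝ))), x ∈ Set.Ioi (0:ℝ) :=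
      ae_restrict_mem measurableSet_Ioi
    filter_upwards [hlt, hmem] with x hTx hx
    have hx0 : (0:ℝ) < x := hx
    set g : ℕ → ℝ := fun k => u₀ (α ^ k * x) * (α ^ 2 * t) ^ k / (Nat.factorial k) with hg
    have hg0 : ∀ k, 0 ≤ g k := fun k => by
      apply div_nonneg (mul_nonneg (hpos _) (pow_nonneg (mul_nonneg (sq_nonneg α) ht) k))
      positivity
    have hFg : ∀ k, F k x = ENNReal.ofReal x * ENNReal.ofReal (g k) := fun k =>
      ENNReal.ofReal_mul hx0.le
    -- summability of g
    have hgsum : Summable g := by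
      have h1 : (∑' k, ENNReal.ofReal (g k)) ≠ ⊤ := by
        intro hcon
        have htop : (∑' k, F k x) = ⊤ := by
          simp_rw [hFg]
          rw [ENNReal.tsum_mul_left, hcon,
            ENNReal.mul_top (ENNReal.ofReal_pos.mpr hx0).ne']
        exact absurd htop hTx.ne
      have h2 : Summable (fun k => (g k).toNNReal) := by
        rw [← ENNReal.tsum_coe_ne_top_iff_summable]
        simpa [ENNReal.ofReal] using h1
      have h3 : (fun k => ((g k).toNNReal : ℝ)) = g := by
        funext k; exact Real.coe_toNNReal _ (hg0 k)
      exact h3 ▸ (NNReal.summable_coe.mpr h2)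
    have hS : ENNReal.ofReal (∑' k, g k) = ∑' k, ENNReal.ofReal (g k) :=
      ENNReal.ofReal_tsum_of_nonneg hg0 hgsum
    calc ENNReal.ofReal (x * (Real.exp (-t) * ∑' k, g k))
        = ENNReal.ofReal (Real.exp (-t)) * (ENNReal.ofReal x * ENNReal.ofReal (∑' k, g k)) := by
          rw [← ENNReal.ofReal_mul hx0.le, ← ENNReal.ofReal_mul (Real.exp_pos _).le]
          congr 1; ring
      _ = ENNReal.ofReal (Real.exp (-t)) * ∑' k, F k x := by
          rw [hS, ← ENNReal.tsum_mul_left]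
          exact congrArg _ (tsum_congr fun k => (hFg k).symm)
  calc ∫⁻ x in Set.Ioi (0:ℝ), ENNReal.ofReal (x * (Real.exp (-t) *
        ∑' k : ℕ, u₀ (α ^ k * x) * (α ^ 2 * t) ^ k / (Nat.factorial k)))
      = ∫⁻ x in Set.Ioi (0:ℝ), ENNReal.ofReal (Real.exp (-t)) * ∑' k, F k x :=
        lintegral_congr_ae hae
    _ = ENNReal.ofReal (Real.exp (-t)) * ∫⁻ x in Set.Ioi (0:ℝ), (∑' k, F k x) :=
        lintegral_const_mul _ hTmeas
    _ = ENNReal.ofReal (Real.exp (-t)) * (ENNReal.ofReal (Real.exp t) * M) := by rw [hsum_int]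
    _ = M := by
        rw [← mul_assoc, ← ENNReal.ofReal_mul (Real.exp_pos _).le, ← Real.exp_add]
        simp
end

section
/- Let α > 1, k ∈ ℤ \ {0}, and let f : [−A, −ε] → ℂ be continuously differentiable (0 < ε < A). Then ∫_{−A}^{−ε} f(y) e^{(Ψ(y) + (2ikπ/log α) y) t} dy → 0 as t → ∞, and moreover √t · ∫_{−A}^{−ε} f(y) e^{(Ψ(y) + (2ikπ/log α) y) t} dy → 0, where Ψ(y) = (y/log α) log(−y/log α) − y/log α − 1. -/
open MeasureTheory Real Filter Complex

theorem stmt_19 (α A ε : ℝ) (hα : 1 < α) (hε : 0 < ε) (hεA : ε < A)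
    (k : ℤ) (hk : k ≠ 0)
    (f : ℝ → ℂ) (hf : ContDiffOn ℝ 1 f (Set.Icc (-A) (-ε))) :
    ∀ Ψ : ℝ → ℝ,
      (Ψ = fun y => y / Real.log α * Real.log (-y / Real.log α) - y / Real.log α - 1) →
      (Tendsto (fun t : ℝ =>
            ∫ y in (-A)..(-ε),
              f y * Complex.exp (((Ψ y : ℂ) +
                2 * Real.pi * Complex.I * (k : ℂ) / (Real.log α : ℂ) * (y : ℂ)) * (t : ℂ)))
          atTop (nhds 0) ∧
       Tendsto (fun t : ℝ => (Real.sqrt t : ℂ) *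
            ∫ y in (-A)..(-ε),
              f y * Complex.exp (((Ψ y : ℂ) +
                2 * Real.pi * Complex.I * (k : ℂ) / (Real.log α : ℂ) * (y : ℂ)) * (t : ℂ)))
          atTop (nhds 0)) := by
  intro Ψ hΨ
  have hL : 0 < Real.log α := Real.log_pos hα
  set L : ℝ := Real.log α with hLdef
  -- notation
  set c : ℂ := 2 * (Real.pi : ℂ) * Complex.I * (k : ℂ) / (L : ℂ) with hcdef
  set S : Set ℝ := Set.Icc (-A) (-ε) with hSdef
  have haeb : (-A : ℝ) ≤ -ε := by linarith
  have haeb' : (-A : ℝ) < -ε := by linarith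
  have hSneg : ∀ y ∈ S, y < 0 := fun y hy => lt_of_le_of_lt hy.2 (by linarith)
  have hS0 : (0:ℝ) ∉ S := fun h => absurd (hSneg 0 h) (lt_irrefl 0)
  set b : ℝ := 2 * Real.pi * k / L with hbdef
  have hb : b ≠ 0 := by
    have hk' : (k:ℝ) ≠ 0 := Int.cast_ne_zero.2 hk
    simp only [hbdef]
    exact div_ne_zero (mul_ne_zero (mul_ne_zero two_ne_zero Real.pi_ne_zero) hk') hL.ne'
  have hcb : c = (b : ℂ) * Complex.I := by
    rw [hcdef, hbdef]
    push_cast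
    have : (L : ℂ) ≠ 0 := Complex.ofReal_ne_zero.2 hL.ne'
    field_simp
  set D : ℝ → ℂ := fun y => ((Real.log (-y / L) / L : ℝ) : ℂ) + c with hDdef
  have hDne : ∀ y, D y ≠ 0 := by
    intro y h
    have him := congrArg Complex.im h
    simp [hDdef, hcb] at him
    exact hb him
  set Dd : ℝ → ℂ := fun y => ((1 / y / L : ℝ) : ℂ) with hDddef
  -- derivative of the real phase
  have hlog : ∀ y : ℝ, y < 0 → HasDerivAt (fun y => Real.log (-y / L)) (1 / y) y := by
    intro y hy
    have h1 : HasDerivAt (fun y : ℝ => -y / L) (-1 / L) y := (hasDerivAt_neg y).div_const L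
    have h2 : -y / L ≠ 0 := (div_pos (by linarith) hL).ne'
    have := h1.log h2
    convert this using 1
    field_simp
  have hΨd : ∀ y : ℝ, y < 0 → HasDerivAt Ψ (Real.log (-y / L) / L) y := by
    intro y hy
    have h3 : HasDerivAt (fun y : ℝ => y / L) (1 / L) y := (hasDerivAt_id y).div_const L
    have := ((h3.mul (hlog y hy)).sub h3).sub_const 1
    rw [hΨ]
    exact this.congr_deriv (by field_simp; simp [hy.ne])
  -- phase, complex
  set φC : ℝ → ℂ := fun y => ((Ψ y : ℝ) : ℂ) + c * (y : ℂ) with hφdef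
  have hφd : ∀ y : ℝ, y < 0 → HasDerivAt φC (D y) y := by
    intro y hy
    have h1 : HasDerivAt (fun y : ℝ => ((Ψ y : ℝ) : ℂ)) ((Real.log (-y / L) / L : ℝ) : ℂ) y :=
      (hΨd y hy).ofReal_comp
    have h2 : HasDerivAt (fun y : ℝ => c * (y : ℂ)) (c * 1) y :=
      ((hasDerivAt_id y).ofReal_comp).const_mul c
    exact (h1.add h2).congr_deriv (by simp [hDdef])
  have hDd : ∀ y : ℝ, y < 0 → HasDerivAt D (Dd y) y := by
    intro y hy
    have := (((hlog y hy).div_const L).ofReal_comp).add_const c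
    simpa [hDdef, hDddef] using this
  -- Ψ ≤ 0 on S
  have hΨ0 : ∀ y ∈ S, Ψ y ≤ 0 := by
    intro y hy
    have hyneg := hSneg y hy
    have hu : 0 < -y / L := div_pos (by linarith) hL
    have h := Real.log_le_sub_one_of_pos (inv_pos.2 hu)
    rw [Real.log_inv] at h
    have hinv : (-y / L) * (-y / L)⁻¹ = 1 := mul_inv_cancel₀ hu.ne'
    rw [hΨ]
    have hyL : y / L = -(-y / L) := by ring
    nlinarith [mul_le_mul_of_nonneg_left h hu.le]
  -- the exponential factor
  set E : ℝ → ℝ → ℂ := fun t y => Complex.exp (φC y * (t : ℂ)) with hEdef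
  have hre : ∀ t y : ℝ, (φC y * (t : ℂ)).re = Ψ y * t := by
    intro t y
    simp [hφdef, hcb, Complex.mul_re, Complex.add_re, Complex.add_im]
  have hEb : ∀ t : ℝ, 0 ≤ t → ∀ y ∈ S, ‖E t y‖ ≤ 1 := by
    intro t ht y hy
    rw [hEdef]
    simp only [Complex.norm_exp, hre]
    exact Real.exp_le_one_iff.2 (mul_nonpos_of_nonpos_of_nonneg (hΨ0 y hy) ht)
  have hEd : ∀ t : ℝ, ∀ y : ℝ, y < 0 → HasDerivAt (E t) (D y * (t : ℂ) * E t y) y := by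
    intro t y hy
    have := ((hφd y hy).mul_const (t : ℂ)).cexp
    simpa [hEdef, mul_comm] using this
  -- g = f / D and its derivative
  set fd : ℝ → ℂ := fun y => derivWithin f S y with hfddef
  have hUD : UniqueDiffOn ℝ S := uniqueDiffOn_Icc haeb'
  have hfdW : ∀ y ∈ S, HasDerivWithinAt f (fd y) S y := fun y hy =>
    (hf.differentiableOn one_ne_zero y hy).hasDerivWithinAt
  have hfdC : ContinuousOn fd S := hf.continuousOn_derivWithin hUD le_rfl
  set g : ℝ → ℂ := fun y => f y / D y with hgdef
  set gd : ℝ → ℂ := fun y => (fd y * D y - f y * Dd y) / (D y) ^ 2 with hgddef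
  have hgW : ∀ y ∈ S, HasDerivWithinAt g (gd y) S y := by
    intro y hy
    exact (hfdW y hy).div ((hDd y (hSneg y hy)).hasDerivWithinAt) (hDne y)
  -- continuity facts
  have hDC : ContinuousOn D S := by
    apply ContinuousOn.add _ continuousOn_const
    apply Complex.continuous_ofReal.comp_continuousOn
    apply ContinuousOn.div_const
    apply ContinuousOn.log
    · exact (continuousOn_id.neg.div_const L)
    · intro y hy
      have h0 := hSneg y hy
      have : 0 < -y / L := div_pos (by linarith) hL
      exact this.ne'
  have hDdC : ContinuousOn Dd S := by
    apply Complex.continuous_ofReal.comp_continuousOn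
    apply ContinuousOn.div_const
    exact continuousOn_const.div continuousOn_id (fun y hy => (hSneg y hy).ne)
  have hfC : ContinuousOn f S := hf.continuousOn
  have hgdC : ContinuousOn gd S :=
    ((hfdC.mul hDC).sub (hfC.mul hDdC)).div (hDC.pow 2) (fun y hy => pow_ne_zero 2 (hDne y))
  have hgC : ContinuousOn g S := hfC.div hDC (fun y hy => hDne y)
  have hEC : ∀ t : ℝ, ContinuousOn (E t) S := by
    intro t
    apply Complex.continuous_exp.comp_continuousOn
    apply ContinuousOn.mul _ continuousOn_const
    apply ContinuousOn.add _ (continuousOn_const.mul (Complex.continuous_ofReal.continuousOn))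
    apply Complex.continuous_ofReal.comp_continuousOn
    rw [hΨ]
    apply ContinuousOn.sub
    apply ContinuousOn.sub
    · exact (continuousOn_id.div_const L).mul
        (((continuousOn_id.neg.div_const L).log (fun y hy => by
          have h0 := hSneg y hy
          have h1 : 0 < -y / L := div_pos (by linarith) hL
          simpa using h1.ne')))
    · exact continuousOn_id.div_const L
    · exact continuousOn_const
  have huIcc : Set.uIcc (-A) (-ε) = S := Set.uIcc_of_le haeb
  -- key integration by parts identity
  set I : ℝ → ℂ := fun t => ∫ y in (-A)..(-ε), f y * E t y with hIdef
  have key : ∀ t : ℝ, (t : ℂ) * I t =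
      g (-ε) * E t (-ε) - g (-A) * E t (-A) - ∫ y in (-A)..(-ε), gd y * E t y := by
    intro t
    have hma : (-A : ℝ) ∈ S := Set.left_mem_Icc.2 haeb
    have hme : (-ε : ℝ) ∈ S := Set.right_mem_Icc.2 haeb
    have ibp := intervalIntegral.integral_mul_deriv_eq_deriv_mul_of_hasDerivWithinAt
      (u := g) (v := E t) (u' := gd) (v' := fun y => D y * (t : ℂ) * E t y)
      (a := -A) (b := -ε)
      (fun y hy => by rw [huIcc] at hy ⊢; exact hgW y hy)
      (fun y hy => by rw [huIcc] at hy ⊢; exact (hEd t y (hSneg y hy)).hasDerivWithinAt)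
      (by rw [intervalIntegrable_iff_integrableOn_Icc_of_le haeb]
          exact (hgdC.mono (by rw [hSdef])).integrableOn_compact isCompact_Icc)
      (by rw [intervalIntegrable_iff_integrableOn_Icc_of_le haeb]
          exact (((hDC.mul continuousOn_const).mul (hEC t)).mono
            (by rw [hSdef])).integrableOn_compact isCompact_Icc)
    have heq : ∀ y ∈ S, g y * (D y * (t : ℂ) * E t y) = (t : ℂ) * (f y * E t y) := by
      intro y hy
      rw [hgdef]
      field_simp [hDne y]
    have : (∫ y in (-A)..(-ε), g y * (D y * (t : ℂ) * E t y)) = (t : ℂ) * I t := by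
      rw [hIdef, ← intervalIntegral.integral_const_mul]
      apply intervalIntegral.integral_congr
      intro y hy
      rw [huIcc] at hy
      exact heq y hy
    rw [← this, ibp]
  -- the constant
  set C : ℝ := ‖g (-ε)‖ + ‖g (-A)‖ + ∫ y in (-A)..(-ε), ‖gd y‖ with hCdef
  have hintnn : 0 ≤ ∫ y in (-A)..(-ε), ‖gd y‖ :=
    intervalIntegral.integral_nonneg haeb (fun y hy => norm_nonneg _)
  have hC0 : 0 ≤ C := by positivity
  have hbound : ∀ t : ℝ, 1 ≤ t → ‖I t‖ ≤ C / t := by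
    intro t ht
    have ht0 : 0 < t := lt_of_lt_of_le one_pos ht
    have hma : (-A : ℝ) ∈ S := Set.left_mem_Icc.2 haeb
    have hme : (-ε : ℝ) ∈ S := Set.right_mem_Icc.2 haeb
    have h1 : ‖g (-ε) * E t (-ε)‖ ≤ ‖g (-ε)‖ := by
      rw [norm_mul]
      calc ‖g (-ε)‖ * ‖E t (-ε)‖ ≤ ‖g (-ε)‖ * 1 :=
            mul_le_mul_of_nonneg_left (hEb t ht0.le _ hme) (norm_nonneg _)
        _ = ‖g (-ε)‖ := mul_one _
    have h2 : ‖g (-A) * E t (-A)‖ ≤ ‖g (-A)‖ := by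
      rw [norm_mul]
      calc ‖g (-A)‖ * ‖E t (-A)‖ ≤ ‖g (-A)‖ * 1 :=
            mul_le_mul_of_nonneg_left (hEb t ht0.le _ hma) (norm_nonneg _)
        _ = ‖g (-A)‖ := mul_one _
    have h3 : ‖∫ y in (-A)..(-ε), gd y * E t y‖ ≤ ∫ y in (-A)..(-ε), ‖gd y‖ := by
      refine le_trans (intervalIntegral.norm_integral_le_of_norm_le haeb ?_ ?_)
        le_rfl
      · apply Filter.Eventually.of_forall
        intro y hy
        have hyS : y ∈ S := by
          exact ⟨hy.1.le, hy.2⟩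
        rw [norm_mul]
        calc ‖gd y‖ * ‖E t y‖ ≤ ‖gd y‖ * 1 :=
              mul_le_mul_of_nonneg_left (hEb t ht0.le _ hyS) (norm_nonneg _)
          _ = ‖gd y‖ := mul_one _
      · rw [intervalIntegrable_iff_integrableOn_Icc_of_le haeb]
        exact ((hgdC.norm).mono (by rw [hSdef])).integrableOn_compact isCompact_Icc
    have hkey := key t
    have hnorm : t * ‖I t‖ ≤ C := by
      have : ‖(t : ℂ) * I t‖ = t * ‖I t‖ := by
        rw [norm_mul, Complex.norm_real, Real.norm_of_nonneg ht0.le]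
      rw [← this, hkey, hCdef]
      calc ‖g (-ε) * E t (-ε) - g (-A) * E t (-A) - ∫ y in (-A)..(-ε), gd y * E t y‖
          ≤ ‖g (-ε) * E t (-ε) - g (-A) * E t (-A)‖ + ‖∫ y in (-A)..(-ε), gd y * E t y‖ :=
            norm_sub_le _ _
        _ ≤ (‖g (-ε) * E t (-ε)‖ + ‖g (-A) * E t (-A)‖) + ‖∫ y in (-A)..(-ε), gd y * E t y‖ :=
            add_le_add_left (norm_sub_le _ _) _
        _ ≤ ‖g (-ε)‖ + ‖g (-A)‖ + ∫ y in (-A)..(-ε), ‖gd y‖ := by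
            have := add_le_add (add_le_add h1 h2) h3
            linarith
    rw [le_div_iff₀ ht0]
    linarith [hnorm]
  -- final limits
  have hsqrt : Tendsto Real.sqrt atTop atTop := by
    apply Filter.tendsto_atTop_atTop.2
    intro x
    refine ⟨x ^ 2, fun a ha => ?_⟩
    rcases le_or_gt x 0 with hx | hx
    · exact le_trans hx (Real.sqrt_nonneg a)
    · exact (Real.le_sqrt hx.le (le_trans (sq_nonneg x) ha)).2 ha
  constructor
  · have h : Tendsto I atTop (nhds 0) := by
      apply squeeze_zero_norm' (a := fun t => C / t)
      · filter_upwards [eventually_ge_atTop (1:ℝ)] with t ht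
        exact hbound t ht
      · exact tendsto_const_nhds.div_atTop tendsto_id
    exact h
  · have h : Tendsto (fun t : ℝ => (Real.sqrt t : ℂ) * I t) atTop (nhds 0) := by
      apply squeeze_zero_norm' (a := fun t => C / Real.sqrt t)
      · filter_upwards [eventually_ge_atTop (1:ℝ)] with t ht
        have ht0 : 0 < t := lt_of_lt_of_le one_pos ht
        have hst : 0 < Real.sqrt t := Real.sqrt_pos.2 ht0
        rw [norm_mul, Complex.norm_real, Real.norm_of_nonneg (Real.sqrt_nonneg t)]
        have h1 : Real.sqrt t * ‖I t‖ ≤ Real.sqrt t * (C / t) :=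
          mul_le_mul_of_nonneg_left (hbound t ht) (Real.sqrt_nonneg t)
        have h2 : Real.sqrt t * (C / t) = C / Real.sqrt t := by
          rw [eq_div_iff hst.ne']
          have hts : Real.sqrt t * Real.sqrt t = t := Real.mul_self_sqrt ht0.le
          field_simp
          nlinarith [hts]
        linarith [h1, h2.le, h2.symm.le]
      · exact tendsto_const_nhds.div_atTop (hsqrt.comp tendsto_id)
    exact h
end
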